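/- Let P be a connected finite Γ-colored d-complete poset and let b, c ∈ Γ be distinct and distant (θ_{bc} = 0). Suppose there exist extensions P″ →(c) P′ →(b) P (i.e., P′ is an extension of P by b and P″ is an extension of P′ by c) and Q″ →(b) Q′ →(c) P. Then P″ is isomorphic to Q″ as a Γ-colored poset: there is a poset isomorphism π : P″ → Q″ with κ_{Q″} ∘ π = κ_{P″}. -/

import Mathlib

/-!
Common definitions: Dynkin diagram data, Γ-colored posets, and the coloring
properties EC, NA, AC, ICE2, UCB1, LCB1 from the paper, together with
Γ-colored d-complete and Γ-colored minuscule posets, top trees, slant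
irreducibility, extensions, lower frontier censuses, and full heaps.
-/

universe u v w

variable {Γ : Type u} {P : Type v}

/-- The integers `θ a b` form a Dynkin diagram datum. -/
def DynkinDatum (θ : Γ → Γ → ℤ) : Prop :=
  (∀ a : Γ, θ a a = 2) ∧ (∀ a b : Γ, a ≠ b → θ a b ≤ 0) ∧
    (∀ a b : Γ, a ≠ b → (θ a b = 0 ↔ θ b a = 0))

/-- Colors `a` and `b` are adjacent. -/
def AdjColor (θ : Γ → Γ → ℤ) (a b : Γ) : Prop := θ a b < 0

/-- The Dynkin diagram is simply laced. -/
def SimplyLaced (θ : Γ → Γ → ℤ) : Prop :=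
  ∀ a b : Γ, a ≠ b → θ a b = 0 ∨ θ a b = -1

/-- All closed intervals are finite. -/
def LocallyFinitePoset (α : Type*) [PartialOrder α] : Prop :=
  ∀ x y : α, (Set.Icc x y).Finite

/-- A poset is connected if it cannot be written as a disjoint union of two nonempty
subposets with no comparabilities between them. -/
def ConnectedPoset (α : Type*) [PartialOrder α] : Prop :=
  ∀ S : Set α, S.Nonempty → Sᶜ.Nonempty → ∃ x ∈ S, ∃ y ∈ Sᶜ, x ≤ y ∨ y ≤ x

section
variable [PartialOrder P]

/-- (EC) Elements with equal colors are comparable. -/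
def ColoredEC (κ : P → Γ) : Prop := ∀ x y : P, κ x = κ y → x ≤ y ∨ y ≤ x

/-- (NA) Neighbors have adjacent colors. -/
def ColoredNA (θ : Γ → Γ → ℤ) (κ : P → Γ) : Prop :=
  ∀ x y : P, x ⋖ y → AdjColor θ (κ x) (κ y)

/-- (AC) Elements with adjacent colors are comparable. -/
def ColoredAC (θ : Γ → Γ → ℤ) (κ : P → Γ) : Prop :=
  ∀ x y : P, AdjColor θ (κ x) (κ y) → x ≤ y ∨ y ≤ x

/-- (ICE2) Between consecutive elements of a color `a`, the census of colors
adjacent to `a` is two. -/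
def ColoredICE2 (θ : Γ → Γ → ℤ) (κ : P → Γ) : Prop :=
  ∀ (a : Γ) (x y : P), κ x = a → κ y = a → x < y → (∀ z ∈ Set.Ioo x y, κ z ≠ a) →
    (∑ᶠ z ∈ Set.Ioo x y, -θ (κ z) a) = 2

/-- `U(x,P)`: elements above `x` with color adjacent to that of `x`. -/
def USet (θ : Γ → Γ → ℤ) (κ : P → Γ) (x : P) : Set P :=
  {y : P | x < y ∧ AdjColor θ (κ y) (κ x)}

/-- `L(x,P)`: elements below `x` with color adjacent to that of `x`. -/
def LSet (θ : Γ → Γ → ℤ) (κ : P → Γ) (x : P) : Set P :=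
  {y : P | y < x ∧ AdjColor θ (κ y) (κ x)}

/-- (UCB1) Upper frontier census bound. -/
def ColoredUCB1 (θ : Γ → Γ → ℤ) (κ : P → Γ) : Prop :=
  ∀ x : P, (∀ y : P, κ y = κ x → ¬x < y) →
    (USet θ κ x).Finite ∧ (∑ᶠ y ∈ USet θ κ x, -θ (κ y) (κ x)) ≤ 1

/-- (LCB1) Lower frontier census bound. -/
def ColoredLCB1 (θ : Γ → Γ → ℤ) (κ : P → Γ) : Prop :=
  ∀ x : P, (∀ y : P, κ y = κ x → ¬y < x) →
    (LSet θ κ x).Finite ∧ (∑ᶠ y ∈ LSet θ κ x, -θ (κ y) (κ x)) ≤ 1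

/-- A Γ-colored d-complete poset: locally finite, surjectively colored, and
satisfying EC, NA, AC, ICE2, and UCB1. -/
def GColoredDComplete (θ : Γ → Γ → ℤ) (κ : P → Γ) : Prop :=
  LocallyFinitePoset P ∧ Function.Surjective κ ∧ ColoredEC κ ∧ ColoredNA θ κ ∧
    ColoredAC θ κ ∧ ColoredICE2 θ κ ∧ ColoredUCB1 θ κ

/-- A Γ-colored minuscule poset: Γ-colored d-complete and LCB1. -/
def GColoredMinuscule (θ : Γ → Γ → ℤ) (κ : P → Γ) : Prop :=
  GColoredDComplete θ κ ∧ ColoredLCB1 θ κ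

/-- The top tree: the set of elements maximal in their color class. -/
def TopTree (κ : P → Γ) : Set P := {x : P | ∀ y : P, κ y = κ x → ¬x < y}

/-- `x` is covered by `y` within the subposet `S`. -/
def CoversIn (S : Set P) (x y : P) : Prop :=
  x ∈ S ∧ y ∈ S ∧ x < y ∧ ∀ z ∈ S, x < z → ¬z < y

/-- Slant irreducibility of a Γ-colored d-complete poset. -/
def SlantIrreducible (κ : P → Γ) : Prop :=
  ConnectedPoset P ∧ ∀ x y : P, CoversIn (TopTree κ) x y → ∃ z : P, z ≠ y ∧ κ z = κ y

/-- A saturated chain in a subposet `S`: a chain that is convex in `S`. -/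
def SaturatedChainIn (S C : Set P) : Prop :=
  C ⊆ S ∧ IsChain (· ≤ ·) C ∧ ∀ x ∈ C, ∀ y ∈ C, ∀ z ∈ S, x < z → z < y → z ∈ C

/-- The lower frontier census at the element `y`. -/
noncomputable def LCensus (θ : Γ → Γ → ℤ) (κ : P → Γ) (y : P) : ℤ :=
  ∑ᶠ x ∈ LSet θ κ y, -θ (κ x) (κ y)

/-- A full heap: locally finite, surjectively colored, EC, NA, AC, ICE2, and every
color class order-isomorphic to ℤ. -/
def FullHeap (θ : Γ → Γ → ℤ) (κ : P → Γ) : Prop :=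
  LocallyFinitePoset P ∧ Function.Surjective κ ∧ ColoredEC κ ∧ ColoredNA θ κ ∧
    ColoredAC θ κ ∧ ColoredICE2 θ κ ∧ ∀ a : Γ, Nonempty ({x : P // κ x = a} ≃o ℤ)

end

/-- `ι` realizes the colored poset `A` as an order filter of the colored poset `B`. -/
def FilterEmbedding {G : Type*} {A B : Type*} [PartialOrder A] [PartialOrder B]
    (κ : A → G) (κ' : B → G) (ι : A → B) : Prop :=
  (∀ p q : A, ι p ≤ ι q ↔ p ≤ q) ∧ (∀ p : A, κ' (ι p) = κ p) ∧ IsUpperSet (Set.range ι)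

/-- `B` is an extension of `A` by the color `a`, with extending element `x`. -/
def IsExtensionBy {G : Type*} {A B : Type*} [PartialOrder A] [PartialOrder B]
    (θ : G → G → ℤ) (κ : A → G) (κ' : B → G) (a : G) (ι : A → B) (x : B) : Prop :=
  Finite B ∧ GColoredDComplete θ κ' ∧ ConnectedPoset B ∧
    FilterEmbedding κ κ' ι ∧ (Set.range ι)ᶜ = {x} ∧ κ' x = a

section AuxExt

variable {G : Type u}

private lemma adj_symm' {θ : G → G → ℤ} (hθ : DynkinDatum θ) {a b : G}
    (h : θ a b < 0) : θ b a < 0 := by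
  have hne : a ≠ b := by rintro rfl; rw [hθ.1 a] at h; omega
  rcases lt_or_eq_of_le (hθ.2.1 b a hne.symm) with h' | h'
  · exact h'
  · exact absurd ((hθ.2.2 b a hne.symm).1 h') (by omega)

variable {A B : Type*} [PartialOrder A] [PartialOrder B]
  {θ : G → G → ℤ} {κ : A → G} {κ' : B → G} {a : G} {ι : A → B} {x : B}

private lemma ext_x_not_mem (h : IsExtensionBy θ κ κ' a ι x) : x ∉ Set.range ι := by
  have hx : x ∈ (Set.range ι)ᶜ := by rw [h.2.2.2.2.1]; rfl
  exact hx

private lemma ext_mem_range (h : IsExtensionBy θ κ κ' a ι x) {z : B} (hz : z ≠ x) :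
    z ∈ Set.range ι := by
  by_contra hc
  have : z ∈ (Set.range ι)ᶜ := hc
  rw [h.2.2.2.2.1] at this
  exact hz this

private lemma ext_not_lt (h : IsExtensionBy θ κ κ' a ι x) (z : B) : ¬ z < x := by
  intro hz
  have hzr : z ∈ Set.range ι := ext_mem_range h hz.ne
  exact ext_x_not_mem h (h.2.2.2.1.2.2 hz.le hzr)

private lemma ext_lt_iff (hθ : DynkinDatum θ) (h : IsExtensionBy θ κ κ' a ι x) (z : B) :
    x < z ↔ ∃ w, w ≤ z ∧ w ≠ x ∧ (κ' w = a ∨ θ (κ' w) a < 0) := by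
  have hfin : Finite B := h.1
  have hdc := h.2.1
  have hxa : κ' x = a := h.2.2.2.2.2
  constructor
  · intro hz
    have hsfin : {w : B | x < w ∧ w ≤ z}.Finite := Set.toFinite _
    obtain ⟨w, ⟨hw1, hw2⟩, hmin⟩ : ∃ w ∈ {w : B | x < w ∧ w ≤ z},
        ∀ v ∈ {w : B | x < w ∧ w ≤ z}, v ≤ w → w = v := by
      obtain ⟨w, hw⟩ := hsfin.exists_minimal ⟨z, hz, le_refl _⟩
      exact ⟨w, hw.1, fun v hv hle => le_antisymm (hw.2 hv hle) hle⟩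
    have hcov : x ⋖ w := by
      refine ⟨hw1, fun v hv1 hv2 => ?_⟩
      have : v ∈ {w : B | x < w ∧ w ≤ z} := ⟨hv1, hv2.le.trans hw2⟩
      exact absurd ((hmin v this hv2.le).symm) hv2.ne
    have hadj : θ (κ' x) (κ' w) < 0 := hdc.2.2.2.1 x w hcov
    rw [hxa] at hadj
    exact ⟨w, hw2, hw1.ne', Or.inr (adj_symm' hθ hadj)⟩
  · rintro ⟨w, hwz, hwx, hcol⟩
    have hcomp : w ≤ x ∨ x ≤ w := by
      rcases hcol with hcol | hcol
      · exact hdc.2.2.1 w x (by rw [hcol, hxa])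
      · exact hdc.2.2.2.2.1 w x (by rw [hxa]; exact hcol)
    rcases hcomp with hle | hle
    · exact absurd (lt_of_le_of_ne hle hwx) (ext_not_lt h w)
    · exact lt_of_lt_of_le (lt_of_le_of_ne hle (Ne.symm hwx)) hwz

private lemma ext_lt_image_iff (hθ : DynkinDatum θ) (h : IsExtensionBy θ κ κ' a ι x)
    (p : A) : x < ι p ↔ ∃ q, q ≤ p ∧ (κ q = a ∨ θ (κ q) a < 0) := by
  rw [ext_lt_iff hθ h]
  constructor
  · rintro ⟨w, hwz, hwx, hcol⟩
    obtain ⟨q, rfl⟩ := ext_mem_range h hwx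
    rw [h.2.2.2.1.2.1 q] at hcol
    exact ⟨q, (h.2.2.2.1.1 q p).1 hwz, hcol⟩
  · rintro ⟨q, hq, hcol⟩
    refine ⟨ι q, (h.2.2.2.1.1 q p).2 hq, fun he => ext_x_not_mem h ⟨q, he⟩, ?_⟩
    rwa [h.2.2.2.1.2.1 q]

private lemma ext_lt_map_iff (h : IsExtensionBy θ κ κ' a ι x) (p q : A) :
    ι p < ι q ↔ p < q := by
  have hi := h.2.2.2.1.1
  constructor
  · intro hlt
    exact lt_of_le_of_ne ((hi p q).1 hlt.le) (fun he => hlt.ne (by rw [he]))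
  · intro hlt
    exact lt_of_le_of_ne ((hi p q).2 hlt.le)
      (fun he => hlt.ne (le_antisymm hlt.le (by rw [← (hi q p)]; rw [he])))

private lemma ext_equiv (h : IsExtensionBy θ κ κ' a ι x) :
    ∃ e : Option A ≃ B, e none = x ∧ ∀ p, e (some p) = ι p := by
  have hinj : Function.Injective ι := fun p q he =>
    le_antisymm ((h.2.2.2.1.1 p q).1 (le_of_eq he)) ((h.2.2.2.1.1 q p).1 (le_of_eq he.symm))
  have hb : Function.Bijective (fun o : Option A => o.elim x ι) := by
    constructor
    · rintro (_|p) (_|q) he <;> simp only [Option.elim] at he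
      · rfl
      · exact absurd ⟨q, he.symm⟩ (ext_x_not_mem h)
      · exact absurd ⟨p, he⟩ (ext_x_not_mem h)
      · rw [hinj he]
    · intro z
      by_cases hz : z = x
      · exact ⟨none, hz.symm⟩
      · obtain ⟨q, hq⟩ := ext_mem_range h hz
        exact ⟨some q, hq⟩
  exact ⟨Equiv.ofBijective _ hb, rfl, fun p => rfl⟩

end AuxExt

section AuxTwo

variable {G : Type u} {A B C : Type*} [PartialOrder A] [PartialOrder B] [PartialOrder C]
  {θ : G → G → ℤ} {κ : A → G} {κ₁ : B → G} {κ₂ : C → G} {a₁ a₂ : G}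
  {ι₁ : A → B} {x₁ : B} {ι₂ : B → C} {x₂ : C}

/-- Two-level characterization: when the colors of the two extending elements are
distinct and distant, the new minimal element of the outer extension lies below an
image of `p : A` iff `p` has an element of color equal or adjacent to `a₂` below it. -/
private lemma ext2_lt_iff (hθ : DynkinDatum θ)
    (h₁ : IsExtensionBy θ κ κ₁ a₁ ι₁ x₁) (h₂ : IsExtensionBy θ κ₁ κ₂ a₂ ι₂ x₂)
    (hne : a₁ ≠ a₂) (hd : θ a₁ a₂ = 0) (p : A) :
    x₂ < ι₂ (ι₁ p) ↔ ∃ q, q ≤ p ∧ (κ q = a₂ ∨ θ (κ q) a₂ < 0) := by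
  rw [ext_lt_image_iff hθ h₂]
  have hx₁a : κ₁ x₁ = a₁ := h₁.2.2.2.2.2
  constructor
  · rintro ⟨v, hv, hcol⟩
    by_cases hvx : v = x₁
    · rw [hvx, hx₁a] at hcol
      rcases hcol with hcol | hcol
      · exact absurd hcol hne
      · omega
    · obtain ⟨q, rfl⟩ := ext_mem_range h₁ hvx
      rw [h₁.2.2.2.1.2.1 q] at hcol
      exact ⟨q, (h₁.2.2.2.1.1 q p).1 hv, hcol⟩
  · rintro ⟨q, hq, hcol⟩
    refine ⟨ι₁ q, (h₁.2.2.2.1.1 q p).2 hq, ?_⟩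
    rwa [h₁.2.2.2.1.2.1 q]

/-- The two extending elements are incomparable when their colors are distant. -/
private lemma ext2_incomp (hθ : DynkinDatum θ)
    (h₁ : IsExtensionBy θ κ κ₁ a₁ ι₁ x₁) (h₂ : IsExtensionBy θ κ₁ κ₂ a₂ ι₂ x₂)
    (hne : a₁ ≠ a₂) (hd : θ a₁ a₂ = 0) : ¬ x₂ < ι₂ x₁ := by
  intro hlt
  rw [ext_lt_iff hθ h₂] at hlt
  obtain ⟨w, hwz, hwx, hcol⟩ := hlt
  obtain ⟨v, rfl⟩ := ext_mem_range h₂ hwx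
  have hv : v ≤ x₁ := (h₂.2.2.2.1.1 v x₁).1 hwz
  have hvx : v = x₁ := by
    by_contra hc
    exact ext_not_lt h₁ v (lt_of_le_of_ne hv hc)
  rw [hvx, h₂.2.2.2.1.2.1 x₁, h₁.2.2.2.2.2] at hcol
  rcases hcol with hcol | hcol
  · exact hne hcol
  · omega

end AuxTwo

/-- Extensions by distant colors commute: extending a connected finite
Γ-colored d-complete poset P first by b then by c yields a Γ-colored poset isomorphic
to the one obtained by extending first by c then by b, when θ b c = 0. -/
theorem distant_extensions_commute {B C D E : Type*} [Fintype Γ]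
    [PartialOrder P] [Fintype P] [Nonempty P]
    [PartialOrder B] [PartialOrder C] [PartialOrder D] [PartialOrder E]
    (θ : Γ → Γ → ℤ) (κ : P → Γ) (κ₁ : B → Γ) (κ₂ : C → Γ) (μ₁ : D → Γ) (μ₂ : E → Γ)
    (hθ : DynkinDatum θ) (hdc : GColoredDComplete θ κ) (hconn : ConnectedPoset P)
    (b c : Γ) (hbc : b ≠ c) (hdist : θ b c = 0)
    (ι₁ : P → B) (x₁ : B) (h₁ : IsExtensionBy θ κ κ₁ b ι₁ x₁)
    (ι₂ : B → C) (x₂ : C) (h₂ : IsExtensionBy θ κ₁ κ₂ c ι₂ x₂)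
    (j₁ : P → D) (y₁ : D) (h₃ : IsExtensionBy θ κ μ₁ c j₁ y₁)
    (j₂ : D → E) (y₂ : E) (h₄ : IsExtensionBy θ μ₁ μ₂ b j₂ y₂) :
    ∃ π : C ≃o E, ∀ u : C, μ₂ (π u) = κ₂ u := by
  classical
  obtain ⟨eB, heB0, heB1⟩ := ext_equiv h₁
  obtain ⟨eC', heC'0, heC'1⟩ := ext_equiv h₂
  obtain ⟨eD, heD0, heD1⟩ := ext_equiv h₃
  obtain ⟨eE', heE'0, heE'1⟩ := ext_equiv h₄
  set eC : Option (Option P) ≃ C := (Equiv.optionCongr eB).trans eC' with heC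
  set eE : Option (Option P) ≃ E := (Equiv.optionCongr eD).trans eE' with heE
  set s : Option (Option P) ≃ Option (Option P) := Equiv.swap none (some none) with hs
  have hs0 : s none = some none := Equiv.swap_apply_left _ _
  have hs1 : s (some none) = none := Equiv.swap_apply_right _ _
  have hs2 : ∀ p : P, s (some (some p)) = some (some p) := fun p =>
    Equiv.swap_apply_of_ne_of_ne (by simp) (by simp)
  have hC0 : eC none = x₂ := by simp [heC, heC'0]
  have hC1 : eC (some none) = ι₂ x₁ := by simp [heC, heB0, heC'1]
  have hC2 : ∀ p : P, eC (some (some p)) = ι₂ (ι₁ p) := fun p => by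
    simp [heC, heB1, heC'1]
  have hE0 : eE (s none) = j₂ y₁ := by rw [hs0]; simp [heE, heD0, heE'1]
  have hE1 : eE (s (some none)) = y₂ := by rw [hs1]; simp [heE, heE'0]
  have hE2 : ∀ p : P, eE (s (some (some p))) = j₂ (j₁ p) := fun p => by
    rw [hs2]; simp [heE, heD1, heE'1]
  have hcb : c ≠ b := hbc.symm
  have hdcb : θ c b = 0 := (hθ.2.2 b c hbc).1 hdist
  have hlt : ∀ o o' : Option (Option P), eE (s o) < eE (s o') ↔ eC o < eC o' := by
    rintro (_ | (_ | p)) (_ | (_ | q))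
    · exact iff_of_false (lt_irrefl _) (lt_irrefl _)
    · rw [hE0, hE1, hC0, hC1]
      exact iff_of_false (ext_not_lt h₄ _) (ext2_incomp hθ h₁ h₂ hbc hdist)
    · rw [hE0, hE2, hC0, hC2, ext_lt_map_iff h₄, ext_lt_image_iff hθ h₃,
        ext2_lt_iff hθ h₁ h₂ hbc hdist]
    · rw [hE1, hE0, hC1, hC0]
      exact iff_of_false (ext2_incomp hθ h₃ h₄ hcb hdcb) (ext_not_lt h₂ _)
    · exact iff_of_false (lt_irrefl _) (lt_irrefl _)
    · rw [hE1, hE2, hC1, hC2, ext2_lt_iff hθ h₃ h₄ hcb hdcb, ext_lt_map_iff h₂,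
        ext_lt_image_iff hθ h₁]
    · rw [hE2, hE0, hC2, hC0, ext_lt_map_iff h₄]
      exact iff_of_false (ext_not_lt h₃ _) (ext_not_lt h₂ _)
    · rw [hE2, hE1, hC2, hC1, ext_lt_map_iff h₂]
      exact iff_of_false (ext_not_lt h₄ _) (ext_not_lt h₁ _)
    · rw [hE2, hE2, hC2, hC2, ext_lt_map_iff h₄, ext_lt_map_iff h₂,
        ext_lt_map_iff h₃, ext_lt_map_iff h₁]
  have heqv : ∀ o o' : Option (Option P), eE (s o) = eE (s o') ↔ eC o = eC o' := by
    intro o o'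
    rw [eE.apply_eq_iff_eq, s.apply_eq_iff_eq, eC.apply_eq_iff_eq]
  have hle : ∀ o o' : Option (Option P), eE (s o) ≤ eE (s o') ↔ eC o ≤ eC o' := by
    intro o o'
    rw [le_iff_lt_or_eq, le_iff_lt_or_eq, hlt, heqv]
  refine ⟨{ toEquiv := (eC.symm.trans s).trans eE, map_rel_iff' := ?_ }, ?_⟩
  · intro u v
    have := hle (eC.symm u) (eC.symm v)
    simpa using this
  · intro u
    have hu : eC (eC.symm u) = u := eC.apply_symm_apply u
    rcases ho : eC.symm u with _ | (_ | p)
    · rw [ho] at hu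
      have : ((eC.symm.trans s).trans eE) u = j₂ y₁ := by
        simp only [Equiv.trans_apply, ho]; exact hE0
      show μ₂ (((eC.symm.trans s).trans eE) u) = κ₂ u
      rw [this, ← hu, hC0, h₂.2.2.2.2.2]
      rw [h₄.2.2.2.1.2.1 y₁, h₃.2.2.2.2.2]
    · rw [ho] at hu
      have : ((eC.symm.trans s).trans eE) u = y₂ := by
        simp only [Equiv.trans_apply, ho]; exact hE1
      show μ₂ (((eC.symm.trans s).trans eE) u) = κ₂ u
      rw [this, ← hu, hC1, h₄.2.2.2.2.2, h₂.2.2.2.1.2.1 x₁, h₁.2.2.2.2.2]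
    · rw [ho] at hu
      have : ((eC.symm.trans s).trans eE) u = j₂ (j₁ p) := by
        simp only [Equiv.trans_apply, ho]; exact hE2 p
      show μ₂ (((eC.symm.trans s).trans eE) u) = κ₂ u
      rw [this, ← hu, hC2, h₂.2.2.2.1.2.1, h₁.2.2.2.1.2.1,
        h₄.2.2.2.1.2.1, h₃.2.2.2.1.2.1]
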